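/- Let X ⊂ P^{n+1} be a hypersurface of degree d ≥ 2 and dimension n ≥ 2 over F_q with N_q(X) = Θ_n^{d,q}. Then X has at least one nonsingular point, i.e., Sing(X) ≠ X. -/

import Mathlib

open MvPolynomial

section Aux

set_option linter.unusedSectionVars false

variable {K : Type*} [Field K] [Fintype K]


lemma eval_smul_homog {σ : Type*} {f : MvPolynomial σ K} {e : ℕ}
    (hf : f.IsHomogeneous e) (c : K) (v : σ → K) :
    eval (c • v) f = c ^ e * eval v f := by
  conv_lhs => rw [f.as_sum]
  conv_rhs => rw [f.as_sum]
  rw [map_sum, map_sum, Finset.mul_sum]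
  refine Finset.sum_congr rfl fun s hs => ?_
  rw [eval_monomial, eval_monomial]
  have hdeg : (∑ i ∈ s.support, s i) = e := by
    have := hf (mem_support_iff.mp hs)
    simpa [Finsupp.weight_apply, Finsupp.sum] using this
  have key : (s.prod fun i k => (c • v) i ^ k) = c ^ e * s.prod fun i k => v i ^ k := by
    rw [Finsupp.prod, Finsupp.prod, ← hdeg, ← Finset.prod_pow_eq_pow_sum, ← Finset.prod_mul_distrib]
    refine Finset.prod_congr rfl fun i _ => ?_
    simp [mul_pow]
  rw [key]; ring

lemma homog_eval_zero {σ : Type*} {f : MvPolynomial σ K} {e : ℕ}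
    (hf : f.IsHomogeneous e) (he : e ≠ 0) : eval (0 : σ → K) f = 0 := by
  have h := eval_smul_homog hf 0 0
  simpa [smul_zero, zero_pow he] using h




lemma card_affine_zeros {m : ℕ} {f : MvPolynomial (Fin m) K} {e : ℕ}
    (hf : f.IsHomogeneous e) (he : e ≠ 0) :
    Nat.card {v : Fin m → K | eval v f = 0}
      = (Fintype.card K - 1) *
          Nat.card {x : Projectivization K (Fin m → K) | eval x.rep f = 0} + 1 := by
  classical
  set Z := {x : Projectivization K (Fin m → K) | eval x.rep f = 0} with hZ
  set A' := {v : Fin m → K | v ≠ 0 ∧ eval v f = 0} with hA'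
  have hmap : ∀ (x : Z) (c : Kˣ), (c : K) • (x : Projectivization K (Fin m → K)).rep ∈ A' := by
    rintro ⟨x, hx⟩ c
    refine ⟨smul_ne_zero (Units.ne_zero c) x.rep_nonzero, ?_⟩
    rw [eval_smul_homog hf, show eval x.rep f = 0 from hx, mul_zero]
  let F : Z × Kˣ → A' := fun p => ⟨(p.2 : K) • (p.1 : Projectivization K (Fin m → K)).rep,
    hmap p.1 p.2⟩
  have hFbij : Function.Bijective F := by
    constructor
    · rintro ⟨⟨x, hx⟩, c⟩ ⟨⟨y, hy⟩, d⟩ hxy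
      have h1 : (c : K) • x.rep = (d : K) • y.rep := congrArg Subtype.val hxy
      have hxyeq : x = y := by
        rw [← Projectivization.mk_rep x, ← Projectivization.mk_rep y,
          Projectivization.mk_eq_mk_iff]
        refine ⟨c⁻¹ * d, ?_⟩
        have : (d : K) • y.rep = (c : K) • x.rep := h1.symm
        simp [mul_smul, Units.smul_def, this, smul_smul]
      subst hxyeq
      have hc : c = d := by
        refine Units.ext (smul_left_injective K x.rep_nonzero ?_)
        exact h1
      simp [hc]
    · rintro ⟨v, hv, hfv⟩
      obtain ⟨a, ha⟩ := Projectivization.exists_smul_eq_mk_rep K v hv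
      refine ⟨⟨⟨Projectivization.mk K v hv, ?_⟩, a⁻¹⟩, ?_⟩
      · show eval (Projectivization.mk K v hv).rep f = 0
        rw [← ha, Units.smul_def, eval_smul_homog hf, hfv, mul_zero]
      · apply Subtype.ext
        show ((a⁻¹ : Kˣ) : K) • (Projectivization.mk K v hv).rep = v
        rw [← ha]
        simp [Units.smul_def, smul_smul]
  have hcardA' : Nat.card A' = Nat.card Z * (Fintype.card K - 1) := by
    rw [← Nat.card_eq_of_bijective F hFbij, Nat.card_prod, Nat.card_eq_fintype_card (α := Kˣ),
      Fintype.card_units]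
  have hA : {v : Fin m → K | eval v f = 0} = insert (0 : Fin m → K) A' := by
    ext v
    simp only [Set.mem_setOf_eq, Set.mem_insert_iff, hA']
    constructor
    · intro hv
      rcases eq_or_ne v 0 with h | h
      · exact Or.inl h
      · exact Or.inr ⟨h, hv⟩
    · rintro (rfl | ⟨-, hv⟩)
      · exact homog_eval_zero hf he
      · exact hv
  rw [hA, Nat.card_coe_set_eq, Set.ncard_insert_of_notMem (by simp [hA']),
    ← Nat.card_coe_set_eq, hcardA', mul_comm]


lemma my_card_sigma {ι : Type*} [Fintype ι] (β : ι → Type*) [∀ i, Finite (β i)] :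
    Nat.card (Σ i, β i) = ∑ i, Nat.card (β i) := by
  classical
  letI : ∀ i, Fintype (β i) := fun i => Fintype.ofFinite _
  simp [Nat.card_eq_fintype_card, Fintype.card_sigma]

lemma univariate_roots_card (ψ : Polynomial K) (hψ : ψ ≠ 0) :
    Nat.card {a : K | Polynomial.eval a ψ = 0} ≤ ψ.natDegree := by
  classical
  have hsub : {a : K | Polynomial.eval a ψ = 0} = ↑ψ.roots.toFinset := by
    ext a
    simp [Polynomial.mem_roots, hψ, Polynomial.IsRoot]
  rw [hsub, Nat.card_coe_set_eq, Set.ncard_coe_finset]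
  exact le_trans (Multiset.toFinset_card_le _) (Polynomial.card_roots' ψ)

lemma const_zero_set_empty (g : MvPolynomial (Fin 0) K) (hg : g ≠ 0) :
    {v : Fin 0 → K | eval v g = 0} = ∅ := by
  ext v
  have hc : g.coeff 0 ≠ 0 := fun h => hg (by rw [g.eq_C_of_isEmpty, h, map_zero])
  have hev : eval v g = g.coeff 0 := by
    conv_lhs => rw [g.eq_C_of_isEmpty]
    simp
  simp [hev, hc]

lemma schwartz_zippel : ∀ (m : ℕ) (f : MvPolynomial (Fin m) K) (e : ℕ), f ≠ 0 →
    f.totalDegree ≤ e →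
    Nat.card {v : Fin m → K | eval v f = 0} ≤ e * (Fintype.card K) ^ (m - 1) := by
  intro m
  induction m with
  | zero =>
    intro f e hf _
    simp [const_zero_set_empty f hf]
  | succ m IH =>
    intro f e hf hdeg
    classical
    set φ := finSuccEquiv K m f with hφ
    have hφ0 : φ ≠ 0 := fun h => hf ((finSuccEquiv K m).injective (h.trans (map_zero _).symm))
    set k := φ.natDegree with hk
    set g := φ.coeff k with hg
    have hg0 : g ≠ 0 := Polynomial.leadingCoeff_ne_zero.mpr hφ0
    have hgk : g.totalDegree + k ≤ f.totalDegree :=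
      totalDegree_coeff_finSuccEquiv_add_le f k hg0
    have hkle : k ≤ e := le_trans (le_trans (Nat.le_add_left _ _) hgk) hdeg
    have hgle : g.totalDegree ≤ e - k := by omega
    have hcard : Nat.card {v : Fin (m+1) → K | eval v f = 0}
        = ∑ w : Fin m → K, Nat.card {a : K | eval (Fin.cons a w) f = 0} := by
      rw [← my_card_sigma]
      refine (Nat.card_eq_of_bijective
        (f := fun p : (Σ w : Fin m → K, {a : K | eval (Fin.cons a w) f = 0}) =>
          (⟨Fin.cons p.2.1 p.1, p.2.2⟩ : {v : Fin (m+1) → K | eval v f = 0})) ?_).symm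
      constructor
      · rintro ⟨w, a, ha⟩ ⟨w', a', ha'⟩ h
        have h2 : Fin.cons (α := fun _ => K) a w = Fin.cons a' w' := congrArg Subtype.val h
        rw [Fin.cons_inj] at h2
        obtain ⟨rfl, rfl⟩ := h2
        rfl
      · rintro ⟨v, hv⟩
        refine ⟨⟨Fin.tail v, v 0, ?_⟩, ?_⟩
        · show eval (Fin.cons (v 0) (Fin.tail v)) f = 0
          rwa [Fin.cons_self_tail]
        · exact Subtype.ext (Fin.cons_self_tail v)
    rw [hcard]
    have hbound : ∀ w : Fin m → K, eval w g ≠ 0 →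
        Nat.card {a : K | eval (Fin.cons a w) f = 0} ≤ k := by
      intro w hw
      set ψ := φ.map (eval w) with hψdef
      have hψ0 : ψ ≠ 0 := fun h => hw (by
        have h2 : ψ.coeff k = 0 := by rw [h]; simp
        rwa [hψdef, Polynomial.coeff_map] at h2)
      have hset : {a : K | eval (Fin.cons a w) f = 0} = {a : K | Polynomial.eval a ψ = 0} := by
        ext a
        simp only [Set.mem_setOf_eq]
        rw [eval_eq_eval_mv_eval']
      rw [hset]
      exact le_trans (univariate_roots_card ψ hψ0) Polynomial.natDegree_map_le
    have htriv : ∀ w : Fin m → K,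
        Nat.card {a : K | eval (Fin.cons a w) f = 0} ≤ Fintype.card K := by
      intro w
      rw [Nat.card_coe_set_eq]
      exact le_trans (Set.ncard_le_ncard (Set.subset_univ _) (Set.finite_univ))
        (by simp [Set.ncard_univ, Nat.card_eq_fintype_card])
    have hNg : Nat.card {w : Fin m → K | eval w g = 0} * Fintype.card K
        ≤ (e - k) * Fintype.card K ^ m := by
      rcases Nat.eq_zero_or_pos m with rfl | hm
      · simp [const_zero_set_empty g hg0]
      · have := IH g (e - k) hg0 hgle
        calc Nat.card {w : Fin m → K | eval w g = 0} * Fintype.card K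
            ≤ (e - k) * Fintype.card K ^ (m - 1) * Fintype.card K :=
              Nat.mul_le_mul_right _ this
          _ = (e - k) * Fintype.card K ^ m := by
              rw [mul_assoc, ← pow_succ, Nat.sub_add_cancel hm]
    rw [← Finset.sum_filter_add_sum_filter_not Finset.univ (fun w => eval w g = 0)]
    have h1 : ∑ w ∈ Finset.univ.filter (fun w => eval w g = 0),
        Nat.card {a : K | eval (Fin.cons a w) f = 0} ≤ (e - k) * Fintype.card K ^ m := by
      refine le_trans ?_ hNg
      calc _ ≤ ∑ _w ∈ Finset.univ.filter (fun w => eval w g = 0), Fintype.card K :=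
            Finset.sum_le_sum (fun w _ => htriv w)
        _ = (Finset.univ.filter (fun w => eval w g = 0)).card * Fintype.card K := by
            rw [Finset.sum_const, smul_eq_mul]
        _ = Nat.card {w : Fin m → K | eval w g = 0} * Fintype.card K := by
            congr 1
            rw [Nat.card_coe_set_eq, Set.ncard_eq_toFinset_card']
            congr 1
            ext w
            simp
    have h2 : ∑ w ∈ Finset.univ.filter (fun w => ¬ eval w g = 0),
        Nat.card {a : K | eval (Fin.cons a w) f = 0} ≤ (Fintype.card K) ^ m * k := by
      calc _ ≤ ∑ _w ∈ Finset.univ.filter (fun w => ¬ eval w g = 0), k :=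
            Finset.sum_le_sum (fun w hw => hbound w (by simpa using (Finset.mem_filter.mp hw).2))
        _ ≤ (Fintype.card K) ^ m * k := by
            rw [Finset.sum_const, smul_eq_mul]
            apply Nat.mul_le_mul_right
            exact le_trans (Finset.card_filter_le _ _) (by simp)
    refine le_trans (Nat.add_le_add h1 h2) (le_of_eq ?_)
    rw [mul_comm ((Fintype.card K) ^ m) k, ← Nat.add_mul, Nat.sub_add_cancel hkle]
    norm_num


lemma degree_sub_single {σ : Type*} [DecidableEq σ] (s : σ →₀ ℕ) (i : σ) (h : s i ≠ 0) :
    (s - Finsupp.single i 1).degree + 1 = s.degree := by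
  have hs : (s - Finsupp.single i 1) + Finsupp.single i 1 = s := by
    ext j
    rcases eq_or_ne j i with rfl | hj
    · simp only [Finsupp.add_apply, Finsupp.tsub_apply, Finsupp.single_apply]
      simp only [if_pos rfl, ite_true]
      omega
    · simp [Finsupp.add_apply, Finsupp.tsub_apply, Finsupp.single_apply, (Ne.symm hj)]
  have h1 : Finsupp.degree (Finsupp.single i 1) = 1 := by
    rw [Finsupp.degree_single]
  calc (s - Finsupp.single i 1).degree + 1
      = (s - Finsupp.single i 1).degree + Finsupp.degree (Finsupp.single i 1) := by rw [h1]
    _ = s.degree := by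
        rw [Finsupp.degree_eq_weight_one] at *
        rw [← map_add, hs]

lemma isHomog_pderiv {σ : Type*} [DecidableEq σ] {f : MvPolynomial σ K} {d : ℕ}
    (hf : f.IsHomogeneous d) (i : σ) : (pderiv i f).IsHomogeneous (d - 1) := by
  have hrw : pderiv i f = ∑ s ∈ f.support, pderiv i (monomial s (coeff s f)) := by
    rw [← map_sum, ← f.as_sum]
  rw [hrw]
  apply IsHomogeneous.sum
  intro s hs
  rw [pderiv_monomial]
  rcases eq_or_ne (coeff s f * (s i : K)) 0 with h0 | h0
  · rw [h0, map_zero]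
    exact isHomogeneous_zero _ _ _
  · apply isHomogeneous_monomial
    have hsi : s i ≠ 0 := by
      intro h
      simp [h] at h0
    have hdeg : s.degree = d := by
      rw [Finsupp.degree_eq_weight_one]
      exact hf (mem_support_iff.mp hs)
    have := degree_sub_single s i hsi
    omega

lemma pderiv_coeff_zero {σ : Type*} [DecidableEq σ] {f : MvPolynomial σ K} (i : σ)
    (h : pderiv i f = 0) (s : σ →₀ ℕ) (hs : s ∈ f.support) : (s i : K) = 0 := by
  rcases eq_or_ne (s i) 0 with h0 | h0
  · simp [h0]
  -- extract coefficient of s - single i 1 in pderiv i f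
  have hrw : pderiv i f = ∑ u ∈ f.support, monomial (u - Finsupp.single i 1) (coeff u f * u i) := by
    rw [show (∑ u ∈ f.support, monomial (u - Finsupp.single i 1) (coeff u f * (u i : K)))
        = ∑ u ∈ f.support, pderiv i (monomial u (coeff u f)) from
      Finset.sum_congr rfl fun u _ => (pderiv_monomial).symm]
    rw [← map_sum, ← f.as_sum]
  have hco : coeff (s - Finsupp.single i 1) (pderiv i f) = coeff s f * (s i : K) := by
    rw [hrw, coeff_sum]
    rw [Finset.sum_eq_single s]
    · rw [coeff_monomial, if_pos rfl]
    · intro u hu hus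
      rw [coeff_monomial]
      rcases eq_or_ne (u i) 0 with hui | hui
      · simp [hui]
      · rw [if_neg]
        intro heq
        apply hus
        have : (u - Finsupp.single i 1) + Finsupp.single i 1
            = (s - Finsupp.single i 1) + Finsupp.single i 1 := by rw [heq]
        have hu' : (u - Finsupp.single i 1) + Finsupp.single i 1 = u := by
          ext j
          rcases eq_or_ne j i with rfl | hj
          · simp only [Finsupp.add_apply, Finsupp.tsub_apply, Finsupp.single_apply]
            simp only [if_pos rfl, ite_true]
            omega
          · simp [Finsupp.add_apply, Finsupp.tsub_apply, Finsupp.single_apply, (Ne.symm hj)]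
        have hs' : (s - Finsupp.single i 1) + Finsupp.single i 1 = s := by
          ext j
          rcases eq_or_ne j i with rfl | hj
          · simp only [Finsupp.add_apply, Finsupp.tsub_apply, Finsupp.single_apply]
            simp only [if_pos rfl, ite_true]
            omega
          · simp [Finsupp.add_apply, Finsupp.tsub_apply, Finsupp.single_apply, (Ne.symm hj)]
        rw [hu', hs'] at this
        exact this
    · intro hsn
      exact absurd hs hsn
  have : coeff s f * (s i : K) = 0 := by rw [← hco, h, coeff_zero]
  rcases mul_eq_zero.mp this with h' | h'
  · exact absurd h' (mem_support_iff.mp hs)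
  · exact h'

lemma pth_root_exists {σ : Type*} [DecidableEq σ] {f : MvPolynomial σ K} {d : ℕ}
    (p : ℕ) [hp : Fact p.Prime] [CharP K p]
    (hf : f.IsHomogeneous d) (hf0 : f ≠ 0) (h : ∀ i, pderiv i f = 0) :
    ∃ (g : MvPolynomial σ K) (t : ℕ), g ^ p = f ∧ g.IsHomogeneous t ∧ p * t = d := by
  haveI : CharP (MvPolynomial σ K) p := charP_of_injective_algebraMap' K p
  haveI : ExpChar (MvPolynomial σ K) p := .prime hp.out
  haveI : ExpChar K p := .prime hp.out
  have hdvd : ∀ s ∈ f.support, ∀ i, p ∣ s i := fun s hs i =>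
    (CharP.cast_eq_zero_iff K p _).mp (pderiv_coeff_zero i (h i) s hs)
  have hdeg : ∀ s ∈ f.support, s.degree = d := fun s hs => by
    rw [Finsupp.degree_eq_weight_one]
    exact hf (mem_support_iff.mp hs)
  obtain ⟨s₀, hs₀⟩ : f.support.Nonempty := support_nonempty.mpr hf0
  have hpd : p ∣ d := by
    rw [← hdeg s₀ hs₀]
    exact Finset.dvd_sum (fun i _ => hdvd s₀ hs₀ i)
  set t := d / p with ht
  have hpt : p * t = d := Nat.mul_div_cancel' hpd
  set divp : (σ →₀ ℕ) → (σ →₀ ℕ) := fun s => Finsupp.mapRange (· / p) (Nat.zero_div p) s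
    with hdivp_def
  have hdivp : ∀ s ∈ f.support, p • divp s = s := by
    intro s hs
    ext j
    rw [Finsupp.smul_apply]
    show p * (Finsupp.mapRange (· / p) (Nat.zero_div p) s) j = s j
    rw [Finsupp.mapRange_apply]
    exact Nat.mul_div_cancel' (hdvd s hs j)
  have hdegdiv : ∀ s ∈ f.support, (divp s).degree = t := by
    intro s hs
    have hss : (divp s).support ⊆ s.support := Finsupp.support_mapRange
    have hsum : (divp s).degree = ∑ j ∈ s.support, s j / p := by
      rw [Finsupp.degree_apply]
      refine Finset.sum_subset hss (fun j _ hnj => Finsupp.notMem_support_iff.mp hnj)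
    have hmul : p * (divp s).degree = d := by
      rw [hsum, Finset.mul_sum]
      rw [← hdeg s hs]
      refine Finset.sum_congr rfl (fun j _ => Nat.mul_div_cancel' (hdvd s hs j))
    have := hpt
    exact Nat.eq_of_mul_eq_mul_left hp.out.pos (by rw [hmul, hpt])
  set g : MvPolynomial σ K :=
    ∑ s ∈ f.support, monomial (divp s) ((frobeniusEquiv K p).symm (coeff s f)) with hg
  refine ⟨g, t, ?_, ?_, hpt⟩
  · rw [hg, sum_pow_char]
    rw [show (∑ s ∈ f.support,
        (monomial (divp s) ((frobeniusEquiv K p).symm (coeff s f))) ^ p)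
      = ∑ s ∈ f.support, monomial s (coeff s f) from ?_, ← f.as_sum]
    refine Finset.sum_congr rfl (fun s hs => ?_)
    rw [monomial_pow, hdivp s hs]
    congr 1
    conv_rhs => rw [← (frobeniusEquiv K p).apply_symm_apply (coeff s f)]
    rfl
  · rw [hg]
    apply IsHomogeneous.sum
    intro s hs
    exact isHomogeneous_monomial _ (hdegdiv s hs)

end Aux

section Main

lemma key_id {q d n : ℕ} (hq : 2 ≤ q) (hd : 2 ≤ d) (hn : 2 ≤ n) :
    (((q - 1) * ((d - 1) * q ^ n + d * q ^ (n - 1) + ∑ i ∈ Finset.range (n - 1), q ^ i) + 1 : ℕ)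
      : ℤ) = (q : ℤ) ^ (n - 1) * ((d - 1) * q ^ 2 + q + 1 - d) := by
  obtain ⟨k, rfl⟩ : ∃ k, n = k + 2 := ⟨n - 2, by omega⟩
  have h1 : k + 2 - 1 = k + 1 := by omega
  rw [h1]
  have hq1 : 1 ≤ q := by omega
  have hd1 : 1 ≤ d := by omega
  push_cast [Nat.cast_sub hq1, Nat.cast_sub hd1]
  linear_combination geom_sum_mul (q : ℤ) (k + 1)

/-- a hypersurface `X ⊂ P^{n+1}` of degree `d ≥ 2`, `n ≥ 2`, with
`N_q(X) = Θ_n^{d,q}` has at least one nonsingular `F_q`-point: `Sing(X) ⊊ X`. -/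
theorem stmt15 (q d n : ℕ) (hq : IsPrimePow q) (hn : 2 ≤ n) (hd : 2 ≤ d)
    (K : Type*) [Field K] [Fintype K] (hK : Fintype.card K = q)
    (P : MvPolynomial (Fin (n + 2)) K) (hP : P.IsHomogeneous d) (hP0 : P ≠ 0)
    (hNX : Nat.card {x : Projectivization K (Fin (n + 2) → K) |
        MvPolynomial.eval x.rep P = 0} =
      (d - 1) * q ^ n + d * q ^ (n - 1) + ∑ i ∈ Finset.range (n - 1), q ^ i) :
    ∃ v : Fin (n + 2) → K, v ≠ 0 ∧ MvPolynomial.eval v P = 0 ∧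
      ∃ i, MvPolynomial.eval v (MvPolynomial.pderiv i P) ≠ 0 := by
  classical
  by_contra hcon
  push_neg at hcon
  have hq2 : 2 ≤ q := hK ▸ Fintype.one_lt_card
  have hd0 : d ≠ 0 := by omega
  -- affine zero set count
  have hA : Nat.card {v : Fin (n+2) → K | eval v P = 0}
      = (q - 1) * ((d - 1) * q ^ n + d * q ^ (n - 1) + ∑ i ∈ Finset.range (n - 1), q ^ i) + 1 := by
    rw [card_affine_zeros hP hd0, hK, hNX]
  have hkey := key_id hq2 hd hn
  have hx2 : (2 : ℤ) ≤ (q : ℤ) := by exact_mod_cast hq2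
  have ha1 : (1 : ℤ) ≤ (q : ℤ) ^ (n - 1) := one_le_pow₀ (by omega)
  have hxd : (2 : ℤ) ≤ (d : ℤ) := by exact_mod_cast hd
  -- cardinality of the whole affine space
  have hspace : Nat.card {v : Fin (n+2) → K | eval v P = 0} ≤ q ^ (n + 2) := by
    calc Nat.card {v : Fin (n+2) → K | eval v P = 0}
        ≤ Nat.card (Fin (n+2) → K) :=
          Nat.card_le_card_of_injective Subtype.val Subtype.val_injective
      _ = q ^ (n + 2) := by
          rw [Nat.card_fun, Nat.card_eq_fintype_card, Nat.card_eq_fintype_card, hK,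
            Fintype.card_fin]
  -- power decompositions
  have hpow2 : (q : ℤ) ^ (n + 1) = (q : ℤ) ^ (n - 1) * (q : ℤ) ^ 2 := by
    rw [← pow_add]
    congr 1
    omega
  have hpow3 : (q : ℤ) ^ (n + 2) = (q : ℤ) ^ (n - 1) * (q : ℤ) ^ 3 := by
    rw [← pow_add]
    congr 1
    omega
  rcases Nat.lt_or_ge (q + 1) d with hbig | hle
  · -- case d ≥ q + 2 : too many points
    have h1 : ((q - 1) * ((d - 1) * q ^ n + d * q ^ (n - 1)
        + ∑ i ∈ Finset.range (n - 1), q ^ i) + 1 : ℕ) ≤ q ^ (n + 2) := hA ▸ hspace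
    have h2 := Int.ofNat_le.mpr h1
    rw [hkey] at h2
    push_cast at h2
    rw [hpow3] at h2
    have hd'' : q + 2 ≤ d := hbig
    have hd' : (q : ℤ) + 2 ≤ (d : ℤ) := by exact_mod_cast hd''
    have h5 : (1 : ℤ) ≤ ((q : ℤ) ^ 2 - 1) * ((d : ℤ) - q - 1) := by
      have w1 : (1 : ℤ) ≤ (q : ℤ) ^ 2 - 1 := by nlinarith
      have w2 : (1 : ℤ) ≤ (d : ℤ) - q - 1 := by linarith
      calc (1 : ℤ) = 1 * 1 := by ring
        _ ≤ _ := mul_le_mul w1 w2 one_pos.le (by linarith)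
    have h6 : (1 : ℤ) * 1 ≤ (q : ℤ) ^ (n - 1) * (((q : ℤ) ^ 2 - 1) * ((d : ℤ) - q - 1)) :=
      mul_le_mul ha1 h5 one_pos.le (by linarith)
    have h7 : (q : ℤ) ^ (n - 1) * (((d : ℤ) - 1) * (q : ℤ) ^ 2 + (q : ℤ) + 1 - (d : ℤ))
        = (q : ℤ) ^ (n - 1) * (q : ℤ) ^ 3
          + (q : ℤ) ^ (n - 1) * (((q : ℤ) ^ 2 - 1) * ((d : ℤ) - q - 1)) := by ring
    linarith [h2, h6, h7]
  · -- d ≤ q + 1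
    -- common Schwartz–Zippel contradiction
    have szcontra : ∀ f : MvPolynomial (Fin (n+2)) K, f ≠ 0 → f.totalDegree ≤ d - 1 →
        (∀ v, eval v P = 0 → eval v f = 0) → d ≤ q → False := by
      intro f hf0 hfdeg hsub hdq
      have hinc : Nat.card {v : Fin (n+2) → K | eval v P = 0}
          ≤ Nat.card {v : Fin (n+2) → K | eval v f = 0} := by
        rw [Nat.card_coe_set_eq, Nat.card_coe_set_eq]
        exact Set.ncard_le_ncard (fun v hv => hsub v hv) (Set.toFinite _)
      have hsz := schwartz_zippel (n+2) f (d-1) hf0 hfdeg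
      rw [hK] at hsz
      have hexp : n + 2 - 1 = n + 1 := rfl
      rw [hexp] at hsz
      have h1 : ((q - 1) * ((d - 1) * q ^ n + d * q ^ (n - 1)
          + ∑ i ∈ Finset.range (n - 1), q ^ i) + 1 : ℕ) ≤ (d - 1) * q ^ (n + 1) := by
        rw [← hA]
        exact le_trans hinc hsz
      have h2 := Int.ofNat_le.mpr h1
      rw [hkey] at h2
      push_cast [Nat.cast_sub (show 1 ≤ d by omega)] at h2
      rw [hpow2] at h2
      have hd' : (d : ℤ) ≤ (q : ℤ) := by exact_mod_cast hdq
      have h9 : (1 : ℤ) * 1 ≤ (q : ℤ) ^ (n - 1) * ((q : ℤ) + 1 - (d : ℤ)) :=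
        mul_le_mul ha1 (by linarith) one_pos.le (by linarith)
      have h7 : (q : ℤ) ^ (n - 1) * (((d : ℤ) - 1) * (q : ℤ) ^ 2 + (q : ℤ) + 1 - (d : ℤ))
          = ((d : ℤ) - 1) * ((q : ℤ) ^ (n - 1) * (q : ℤ) ^ 2)
            + (q : ℤ) ^ (n - 1) * ((q : ℤ) + 1 - (d : ℤ)) := by ring
      linarith [h2, h9, h7]
    -- the universal vanishing in case d = q + 1
    have huniv : d = q + 1 → ∀ v : Fin (n+2) → K, eval v P = 0 := by
      intro hdq1
      have hNA : Nat.card {v : Fin (n+2) → K | eval v P = 0} = q ^ (n + 2) := by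
        rw [hA]
        have hz : (((q - 1) * ((d - 1) * q ^ n + d * q ^ (n - 1)
            + ∑ i ∈ Finset.range (n - 1), q ^ i) + 1 : ℕ) : ℤ) = ((q ^ (n + 2) : ℕ) : ℤ) := by
          rw [hkey]
          push_cast
          rw [hpow3, hdq1]
          push_cast
          ring
        exact_mod_cast hz
      have hU : {v : Fin (n+2) → K | eval v P = 0} = Set.univ := by
        apply Set.eq_of_subset_of_ncard_le (Set.subset_univ _) ?_ Set.finite_univ
        rw [Set.ncard_univ, ← Nat.card_coe_set_eq, hNA]
        calc Nat.card (Fin (n+2) → K) = q ^ (n + 2) := by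
              rw [Nat.card_fun, Nat.card_eq_fintype_card, Nat.card_eq_fintype_card, hK,
                Fintype.card_fin]
          _ ≤ q ^ (n + 2) := le_rfl
      intro v
      exact Set.eq_univ_iff_forall.mp hU v
    by_cases hpdall : ∀ i, pderiv i P = 0
    · -- p-th power case
      set p := ringChar K with hp_def
      haveI hpf : Fact p.Prime := ⟨CharP.char_is_prime K p⟩
      obtain ⟨g, t, hgp, hgh, hpt⟩ := pth_root_exists p hP hP0 hpdall
      have hpq : p ∣ q := by
        obtain ⟨np, hpp, hcard⟩ := FiniteField.card K p
        rw [hK] at hcard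
        rw [hcard]
        exact dvd_pow_self p (by positivity)
      rcases Nat.lt_or_ge d (q + 1) with hdq | hdq
      · -- d ≤ q : Schwartz–Zippel on g
        have hg0 : g ≠ 0 := by
          intro h
          apply hP0
          rw [← hgp, h, zero_pow hpf.out.pos.ne']
        have htd : t ≤ d - 1 := by
          have h2t : 2 * t ≤ d := by
            rw [← hpt]
            exact Nat.mul_le_mul_right t hpf.out.two_le
          omega
        refine szcontra g hg0 (le_trans (hgh.totalDegree_le) htd) ?_ (by omega)
        intro v hv
        have hvp : eval v (g ^ p) = 0 := by rw [hgp]; exact hv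
        rw [map_pow] at hvp
        exact pow_eq_zero_iff hpf.out.pos.ne' |>.mp hvp
      · -- d = q + 1 : p ∣ q and p ∣ q + 1
        have hdq1 : d = q + 1 := by omega
        have hpq1 : p ∣ q + 1 := ⟨t, by rw [← hdq1]; exact hpt.symm⟩
        have h1 : p ∣ 1 := by
          have := Nat.dvd_sub hpq1 hpq
          rwa [show q + 1 - q = 1 from by omega] at this
        exact hpf.out.ne_one (Nat.dvd_one.mp h1)
    · obtain ⟨i, hi⟩ := not_forall.mp hpdall
      have hfh : (pderiv i P).IsHomogeneous (d - 1) := isHomog_pderiv hP i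
      have hd1 : d - 1 ≠ 0 := by omega
      rcases Nat.lt_or_ge d (q + 1) with hdq | hdq
      · refine szcontra (pderiv i P) hi hfh.totalDegree_le ?_ (by omega)
        intro v hv
        rcases eq_or_ne v 0 with rfl | hv0
        · exact homog_eval_zero hfh hd1
        · exact hcon v hv0 hv i
      · have hdq1 : d = q + 1 := by omega
        have hall := huniv hdq1
        have hvanish : ∀ v : Fin (n+2) → K, eval v (pderiv i P) = 0 := by
          intro v
          rcases eq_or_ne v 0 with rfl | hv0
          · exact homog_eval_zero hfh hd1
          · exact hcon v hv0 (hall v) i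
        apply hi
        apply hfh.eq_zero_of_forall_eval_eq_zero_of_le_card hvanish
        rw [Cardinal.mk_fintype, hK]
        have : d - 1 = q := by omega
        rw [this]

end Main
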